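/- There exists a connected simple graph G on 14 vertices whose maximum vertex degree Δ(G) satisfies 2 ≤ Δ(G) ≤ 5 and whose energy satisfies E(G) > 2·ν(G)·√Δ(G), where E(G) is the graph energy and ν(G) is the matching number of G. Since G has 14 vertices it is not isomorphic to any of the cycles C₃, C₅, C₇; hence this disproves the conjecture that every connected graph G not isomorphic to C₃, C₅, C₇ with Δ(G) ∈ {2, 3, 4, 5} satisfies E(G) ≤ 2·ν(G)·√Δ(G). -/

import Mathlib

open SimpleGraph Matrix

/-- The adjacency matrix of a simple graph over `ℝ` is Hermitian. -/
theorem adjMatrix_isHermitian {V : Type*} [Fintype V] [DecidableEq V]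
    (G : SimpleGraph V) [DecidableRel G.Adj] : (G.adjMatrix ℝ).IsHermitian := by
  rw [Matrix.IsHermitian, Matrix.conjTranspose_eq_transpose_of_trivial]
  exact G.isSymm_adjMatrix

/-- The energy of a graph: the sum of the absolute values of the eigenvalues of
its adjacency matrix. -/
noncomputable def graphEnergy {V : Type*} [Fintype V] [DecidableEq V]
    (G : SimpleGraph V) : ℝ :=
  letI : DecidableRel G.Adj := Classical.decRel _
  ∑ i, |(adjMatrix_isHermitian G).eigenvalues i|

/-- The matching number of a graph: the maximum number of edges in a matching. -/
noncomputable def matchingNumber {V : Type*} [Fintype V] (G : SimpleGraph V) : ℕ :=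
  sSup {k | ∃ M : G.Subgraph, M.IsMatching ∧ M.edgeSet.ncard = k}

/-- The maximum vertex degree of a graph. -/
noncomputable def maxDeg {V : Type*} [Fintype V] (G : SimpleGraph V) : ℕ :=
  letI : DecidableRel G.Adj := Classical.decRel _
  G.maxDegree

/-! ### Auxiliary: the counterexample graph -/

def adjL : List (Fin 14 × Fin 14) :=
  [(0,2),(0,12),(0,13),(1,5),(1,7),(1,12),(2,10),(3,4),(3,5),(4,5),(6,7),(6,8),(7,8),(9,10),(10,11)]

def G14 : SimpleGraph (Fin 14) where
  Adj i j := (i,j) ∈ adjL ∨ (j,i) ∈ adjL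
  symm := ⟨fun i j h => by tauto⟩
  loopless := ⟨fun i => by fin_cases i <;> decide⟩

instance instG14 : DecidableRel G14.Adj := fun i j => by unfold G14; infer_instance

/-! ### Spectral lemma -/

lemma conj_pow_aux {n : Type*} [Fintype n] [DecidableEq n] (V D : Matrix n n ℝ)
    (h : star V * V = 1) (k : ℕ) : (V * D * star V) ^ k = V * D ^ k * star V := by
  induction k with
  | zero =>
    simpa [pow_zero, Matrix.mul_one] using
      ((Matrix.mem_unitaryGroup_iff).mp ((Matrix.mem_unitaryGroup_iff').mpr h)).symm
  | succ m ih =>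
    rw [pow_succ, ih, pow_succ, Matrix.mul_assoc (V * D ^ m) _ _,
      ← Matrix.mul_assoc (star V) (V * D) (star V), ← Matrix.mul_assoc (star V) V D, h,
      Matrix.one_mul, ← Matrix.mul_assoc, ← Matrix.mul_assoc, Matrix.mul_assoc V (D ^ m) D]

lemma trace_pow_eq_sum_pow {n : Type*} [Fintype n] [DecidableEq n] {A : Matrix n n ℝ}
    (hA : A.IsHermitian) (k : ℕ) : (A ^ k).trace = ∑ i, (hA.eigenvalues i) ^ k := by
  have hU' : star (hA.eigenvectorUnitary : Matrix n n ℝ) * (hA.eigenvectorUnitary : Matrix n n ℝ) = 1 :=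
    (Matrix.mem_unitaryGroup_iff').mp hA.eigenvectorUnitary.2
  have key : A ^ k = (hA.eigenvectorUnitary : Matrix n n ℝ) *
      (Matrix.diagonal (RCLike.ofReal ∘ hA.eigenvalues)) ^ k *
      star (hA.eigenvectorUnitary : Matrix n n ℝ) := by
    conv_lhs => rw [hA.spectral_theorem]
    exact conj_pow_aux _ _ hU' k
  rw [key, Matrix.trace_mul_comm, ← Matrix.mul_assoc, hU', Matrix.one_mul,
    Matrix.diagonal_pow, Matrix.trace_diagonal]
  simp [Function.comp]

lemma trace_map_pow (X : Matrix (Fin 14) (Fin 14) ℤ) (k : ℕ) :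
    ((X.map ((↑·) : ℤ → ℝ)) ^ k).trace = (((X ^ k).trace : ℤ) : ℝ) := by
  have h1 : X.map ((↑·) : ℤ → ℝ) = (Int.castRingHom ℝ).mapMatrix X := rfl
  rw [h1, ← map_pow]
  simp [Matrix.trace, Matrix.diag, RingHom.mapMatrix_apply, Matrix.map_apply]

/-! ### Certificate polynomials -/

noncomputable def Qpoly : ℝ → ℝ := fun x => ((-95758683601 : ℝ)/250000000000000000000000) + ((15624877487857828826259 : ℝ)/15625000000000000000000) * x + ((-20062745596349355946856117 : ℝ)/500000000000000000000000) * x ^ 2 + ((-19104845094639387948408093 : ℝ)/62500000000000000000000) * x ^ 3 + ((-276545141061923263429459617 : ℝ)/4000000000000000000000000) * x ^ 4 + ((78748259203216807726144187 : ℝ)/31250000000000000000000) * x ^ 5 + ((3936891280047580142084119713 : ℝ)/2000000000000000000000000) * x ^ 6 + ((-288467152749801125962736631 : ℝ)/31250000000000000000000) * x ^ 7 + ((-35282126528180262687729453899 : ℝ)/4000000000000000000000000) * x ^ 8 + ((2496364593049113765927999703 : ℝ)/125000000000000000000000) * x ^ 9 + ((42292558520509039174440131747 : ℝ)/2000000000000000000000000)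 * x ^ 10 + ((-28641071189420446697177711247 : ℝ)/1000000000000000000000000) * x ^ 11 + ((-131835534393219033370696224369 : ℝ)/4000000000000000000000000) * x ^ 12 + ((28871039207210196467526652681 : ℝ)/1000000000000000000000000) * x ^ 13 + ((9043482810528798073944440357 : ℝ)/250000000000000000000000) * x ^ 14 + ((-21110652459918099671178768203 : ℝ)/1000000000000000000000000) * x ^ 15 + ((-58283274588134912414771149061 : ℝ)/2000000000000000000000000) * x ^ 16 + ((11368747985109069031758622897 : ℝ)/1000000000000000000000000) * x ^ 17 + ((3527612874296357711696031419 : ℝ)/200000000000000000000000) * x ^ 18 + ((-180848126786707677695267077 : ℝ)/40000000000000000000000) * x ^ 19 + ((-16244684218536950863383459703 : ℝ)/2000000000000000000000000) * x ^ 20 + ((1313923827592818032315562437 : ℝ)/1000000000000000000000000) * x ^ 21 + ((571998519087382282439310249 : ℝ)/200000000000000000000000) * x ^ 22 + ((-270656315065185508419892907 : ℝ)/1000000000000000000000000) * x ^ 23 + ((-307497639236490650029819837 : ℝ)/400000000000000000000000) * x ^ 24 + ((36614870367121317649132721 : ℝ)/1000000000000000000000000) * x ^ 25 + ((39091268763901969776553719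 : ℝ)/250000000000000000000000) * x ^ 26 + ((-2495704525443436195832083 : ℝ)/1000000000000000000000000) * x ^ 27 + ((-18913799894070799962348289 : ℝ)/800000000000000000000000) * x ^ 28 + ((-86198207796108008796741 : ℝ)/1000000000000000000000000) * x ^ 29 + ((5148758146604452202264601 : ℝ)/2000000000000000000000000) * x ^ 30 + ((34793139419184191542007 : ℝ)/1000000000000000000000000) * x ^ 31 + ((-763281431153618252963267 : ℝ)/4000000000000000000000000) * x ^ 32 + ((-2930934380819061734167 : ℝ)/1000000000000000000000000) * x ^ 33 + ((17244147417194161994567 : ℝ)/2000000000000000000000000) * x ^ 34 + ((45256703586048846333 : ℝ)/500000000000000000000000) * x ^ 35 + ((-717256376551141515841 : ℝ)/4000000000000000000000000) * x ^ 36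

noncomputable def ApolyC : ℝ → ℝ := fun x => ((-309449 : ℝ)/500000000000) + ((-395904146309 : ℝ)/62500000000) * x + ((-44220770213901 : ℝ)/2000000000000) * x ^ 2 + ((1960105385121 : ℝ)/62500000000) * x ^ 3 + ((165116306776761 : ℝ)/2000000000000) * x ^ 4 + ((-3196782983501 : ℝ)/62500000000) * x ^ 5 + ((-52206935659733 : ℝ)/400000000000) * x ^ 6 + ((2025952335109 : ℝ)/50000000000) * x ^ 7 + ((112714013236801 : ℝ)/1000000000000) * x ^ 8 + ((-3335206419827 : ℝ)/200000000000) * x ^ 9 + ((-57679493165859 : ℝ)/1000000000000) * x ^ 10 + ((1671342287791 : ℝ)/500000000000) * x ^ 11 + ((8910063492589 : ℝ)/500000000000) * x ^ 12 + ((-19750218453 : ℝ)/100000000000) * x ^ 13 + ((-260148888641 : ℝ)/80000000000) * x ^ 14 + ((-28076868817 : ℝ)/1000000000000) * x ^ 15 + ((644732371631 : ℝ)/2000000000000) * x ^ 16 + ((1689840477 : ℝ)/500000000000) * x ^ 17 + ((-26781642529 : ℝ)/2000000000000) * x ^ 18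

noncomputable def BpolyC : ℝ → ℝ := fun x => ((-1011189 : ℝ)/200000) * x + ((554141 : ℝ)/250000) * x ^ 2 + ((1821537 : ℝ)/200000) * x ^ 3 + ((-514799 : ℝ)/500000) * x ^ 4 + ((-18201 : ℝ)/3125) * x ^ 5 + ((19247 : ℝ)/250000) * x ^ 6 + ((1437183 : ℝ)/1000000) * x ^ 7 + ((13401 : ℝ)/1000000) * x ^ 8 + ((-1193 : ℝ)/10000) * x ^ 9

noncomputable def CpolyC : ℝ → ℝ := fun x => ((-309449 : ℝ)/500000000000) + ((-458404146309 : ℝ)/62500000000) * x + ((-44220770213901 : ℝ)/2000000000000) * x ^ 2 + ((1960105385121 : ℝ)/62500000000) * x ^ 3 + ((165116306776761 : ℝ)/2000000000000) * x ^ 4 + ((-3196782983501 : ℝ)/62500000000) * x ^ 5 + ((-52206935659733 : ℝ)/400000000000) * x ^ 6 + ((2025952335109 : ℝ)/50000000000) * x ^ 7 + ((112714013236801 : ℝ)/1000000000000) * x ^ 8 + ((-3335206419827 : ℝ)/200000000000) * x ^ 9 + ((-57679493165859 : ℝ)/1000000000000) * x ^ 10 + ((1671342287791 : ℝ)/500000000000)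 * x ^ 11 + ((8910063492589 : ℝ)/500000000000) * x ^ 12 + ((-19750218453 : ℝ)/100000000000) * x ^ 13 + ((-260148888641 : ℝ)/80000000000) * x ^ 14 + ((-28076868817 : ℝ)/1000000000000) * x ^ 15 + ((644732371631 : ℝ)/2000000000000) * x ^ 16 + ((1689840477 : ℝ)/500000000000) * x ^ 17 + ((-26781642529 : ℝ)/2000000000000) * x ^ 18

noncomputable def DpolyC : ℝ → ℝ := fun x => ((707107 : ℝ)/500000) + ((604087 : ℝ)/125000) * x + ((-332111 : ℝ)/200000) * x ^ 2 + ((-4288567 : ℝ)/500000) * x ^ 3 + ((390741 : ℝ)/500000) * x ^ 4 + ((2734983 : ℝ)/500000) * x ^ 5 + ((-15379 : ℝ)/500000) * x ^ 6 + ((-674533 : ℝ)/500000) * x ^ 7 + ((-7949 : ℝ)/500000) * x ^ 8 + ((112023 : ℝ)/1000000) * x ^ 9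

lemma Qpoly_le_abs (x : ℝ) : Qpoly x ≤ |x| := by
  rcases le_or_gt 0 x with hx | hx
  · rw [abs_of_nonneg hx]
    have h : x - Qpoly x = (ApolyC x)^2 + x * (BpolyC x)^2 := by
      unfold Qpoly ApolyC BpolyC; ring
    nlinarith [sq_nonneg (ApolyC x), mul_nonneg hx (sq_nonneg (BpolyC x))]
  · rw [abs_of_neg hx]
    have h : -x - Qpoly x = (CpolyC x)^2 - x * (DpolyC x)^2 := by
      unfold Qpoly CpolyC DpolyC; ring
    nlinarith [sq_nonneg (CpolyC x), mul_nonneg (le_of_lt (neg_pos.mpr hx)) (sq_nonneg (DpolyC x))]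

/-! ### Integer powers of the adjacency matrix -/

def N1 : Matrix (Fin 14) (Fin 14) ℤ :=
  !![0, 0, 1, 0, 0, 0, 0, 0, 0, 0, 0, 0, 1, 1;
  0, 0, 0, 0, 0, 1, 0, 1, 0, 0, 0, 0, 1, 0;
  1, 0, 0, 0, 0, 0, 0, 0, 0, 0, 1, 0, 0, 0;
  0, 0, 0, 0, 1, 1, 0, 0, 0, 0, 0, 0, 0, 0;
  0, 0, 0, 1, 0, 1, 0, 0, 0, 0, 0, 0, 0, 0;
  0, 1, 0, 1, 1, 0, 0, 0, 0, 0, 0, 0, 0, 0;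
  0, 0, 0, 0, 0, 0, 0, 1, 1, 0, 0, 0, 0, 0;
  0, 1, 0, 0, 0, 0, 1, 0, 1, 0, 0, 0, 0, 0;
  0, 0, 0, 0, 0, 0, 1, 1, 0, 0, 0, 0, 0, 0;
  0, 0, 0, 0, 0, 0, 0, 0, 0, 0, 1, 0, 0, 0;
  0, 0, 1, 0, 0, 0, 0, 0, 0, 1, 0, 1, 0, 0;
  0, 0, 0, 0, 0, 0, 0, 0, 0, 0, 1, 0, 0, 0;
  1, 1, 0, 0, 0, 0, 0, 0, 0, 0, 0, 0, 0, 0;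
  1, 0, 0, 0, 0, 0, 0, 0, 0, 0, 0, 0, 0, 0]

def N2 : Matrix (Fin 14) (Fin 14) ℤ :=
  !![3, 1, 0, 0, 0, 0, 0, 0, 0, 0, 1, 0, 0, 0;
  1, 3, 0, 1, 1, 0, 1, 0, 1, 0, 0, 0, 0, 0;
  0, 0, 2, 0, 0, 0, 0, 0, 0, 1, 0, 1, 1, 1;
  0, 1, 0, 2, 1, 1, 0, 0, 0, 0, 0, 0, 0, 0;
  0, 1, 0, 1, 2, 1, 0, 0, 0, 0, 0, 0, 0, 0;
  0, 0, 0, 1, 1, 3, 0, 1, 0, 0, 0, 0, 1, 0;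
  0, 1, 0, 0, 0, 0, 2, 1, 1, 0, 0, 0, 0, 0;
  0, 0, 0, 0, 0, 1, 1, 3, 1, 0, 0, 0, 1, 0;
  0, 1, 0, 0, 0, 0, 1, 1, 2, 0, 0, 0, 0, 0;
  0, 0, 1, 0, 0, 0, 0, 0, 0, 1, 0, 1, 0, 0;
  1, 0, 0, 0, 0, 0, 0, 0, 0, 0, 3, 0, 0, 0;
  0, 0, 1, 0, 0, 0, 0, 0, 0, 1, 0, 1, 0, 0;
  0, 0, 1, 0, 0, 1, 0, 1, 0, 0, 0, 0, 2, 1;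
  0, 0, 1, 0, 0, 0, 0, 0, 0, 0, 0, 0, 1, 1]

def N4 : Matrix (Fin 14) (Fin 14) ℤ :=
  !![11, 6, 0, 1, 1, 0, 1, 0, 1, 0, 6, 0, 0, 0;
  6, 14, 0, 6, 6, 2, 6, 2, 6, 0, 1, 0, 0, 0;
  0, 0, 8, 0, 0, 1, 0, 1, 0, 4, 0, 4, 5, 4;
  1, 6, 0, 7, 6, 6, 1, 1, 1, 0, 0, 0, 1, 0;
  1, 6, 0, 6, 7, 6, 1, 1, 1, 0, 0, 0, 1, 0;
  0, 2, 1, 6, 6, 13, 1, 7, 1, 0, 0, 0, 6, 1;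
  1, 6, 0, 1, 1, 1, 7, 6, 6, 0, 0, 0, 1, 0;
  0, 2, 1, 1, 1, 7, 6, 13, 6, 0, 0, 0, 6, 1;
  1, 6, 0, 1, 1, 1, 6, 6, 7, 0, 0, 0, 1, 0;
  0, 0, 4, 0, 0, 0, 0, 0, 0, 3, 0, 3, 1, 1;
  6, 1, 0, 0, 0, 0, 0, 0, 0, 0, 10, 0, 0, 0;
  0, 0, 4, 0, 0, 0, 0, 0, 0, 3, 0, 3, 1, 1;
  0, 0, 5, 1, 1, 6, 1, 6, 1, 1, 0, 1, 8, 4;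
  0, 0, 4, 0, 0, 1, 0, 1, 0, 1, 0, 1, 4, 3]

def N6 : Matrix (Fin 14) (Fin 14) ℤ :=
  !![45, 33, 0, 9, 9, 2, 9, 2, 9, 0, 29, 0, 0, 0;
  33, 72, 0, 34, 34, 20, 34, 20, 34, 0, 9, 0, 4, 0;
  0, 0, 33, 1, 1, 9, 1, 9, 1, 16, 0, 16, 24, 17;
  9, 34, 1, 32, 31, 33, 10, 12, 10, 0, 1, 0, 9, 1;
  9, 34, 1, 31, 32, 33, 10, 12, 10, 0, 1, 0, 9, 1;
  2, 20, 9, 33, 33, 64, 12, 42, 12, 1, 0, 1, 34, 8;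
  9, 34, 1, 10, 10, 12, 32, 33, 31, 0, 1, 0, 9, 1;
  2, 20, 9, 12, 12, 42, 33, 64, 33, 1, 0, 1, 34, 8;
  9, 34, 1, 10, 10, 12, 31, 33, 32, 0, 1, 0, 9, 1;
  0, 0, 16, 0, 0, 1, 0, 1, 0, 10, 0, 10, 7, 6;
  29, 9, 0, 1, 1, 0, 1, 0, 1, 0, 36, 0, 0, 0;
  0, 0, 16, 0, 0, 1, 0, 1, 0, 10, 0, 10, 7, 6;
  0, 4, 24, 9, 9, 34, 9, 34, 9, 7, 0, 7, 37, 17;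
  0, 0, 17, 1, 1, 8, 1, 8, 1, 6, 0, 6, 17, 11]

def N8 : Matrix (Fin 14) (Fin 14) ℤ :=
  !![197, 180, 0, 62, 62, 26, 62, 26, 62, 0, 132, 0, 4, 0;
  180, 385, 4, 194, 194, 152, 194, 152, 194, 0, 60, 0, 48, 4;
  0, 4, 139, 12, 12, 62, 12, 62, 12, 65, 0, 65, 116, 74;
  62, 194, 12, 162, 161, 183, 76, 98, 76, 1, 12, 1, 65, 11;
  62, 194, 12, 161, 162, 183, 76, 98, 76, 1, 12, 1, 65, 11;
  26, 152, 62, 183, 183, 334, 98, 248, 98, 11, 2, 11, 191, 51;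
  62, 194, 12, 76, 76, 98, 162, 183, 161, 1, 12, 1, 65, 11;
  26, 152, 62, 98, 98, 248, 183, 334, 183, 11, 2, 11, 191, 51;
  62, 194, 12, 76, 76, 98, 161, 183, 162, 1, 12, 1, 65, 11;
  0, 0, 65, 1, 1, 11, 1, 11, 1, 36, 0, 36, 38, 29;
  132, 60, 0, 12, 12, 2, 12, 2, 12, 0, 137, 0, 0, 0;
  0, 0, 65, 1, 1, 11, 1, 11, 1, 36, 0, 36, 38, 29;
  4, 48, 116, 65, 65, 191, 65, 191, 65, 38, 0, 38, 183, 78;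
  0, 4, 74, 11, 11, 51, 11, 51, 11, 29, 0, 29, 78, 45]

def N10 : Matrix (Fin 14) (Fin 14) ℤ :=
  !![903, 985, 4, 392, 392, 232, 392, 232, 392, 0, 593, 0, 60, 4;
  985, 2111, 60, 1119, 1119, 1044, 1119, 1044, 1119, 4, 360, 4, 408, 56;
  4, 60, 598, 102, 102, 388, 102, 388, 102, 269, 0, 269, 569, 329;
  392, 1119, 102, 862, 861, 1035, 520, 694, 520, 14, 98, 14, 434, 88;
  392, 1119, 102, 861, 862, 1035, 520, 694, 520, 14, 98, 14, 434, 88;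
  232, 1044, 388, 1035, 1035, 1807, 694, 1465, 694, 84, 32, 84, 1077, 304;
  392, 1119, 102, 520, 520, 694, 862, 1035, 861, 14, 98, 14, 434, 88;
  232, 1044, 388, 694, 694, 1465, 1035, 1807, 1035, 84, 32, 84, 1077, 304;
  392, 1119, 102, 520, 520, 694, 861, 1035, 862, 14, 98, 14, 434, 88;
  0, 4, 269, 14, 14, 84, 14, 84, 14, 137, 0, 137, 192, 132;
  593, 360, 0, 98, 98, 32, 98, 32, 98, 0, 543, 0, 4, 0;
  0, 4, 269, 14, 14, 84, 14, 84, 14, 137, 0, 137, 192, 132;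
  60, 408, 569, 434, 434, 1077, 434, 1077, 434, 192, 4, 192, 942, 377;
  4, 56, 329, 88, 88, 304, 88, 304, 88, 132, 0, 132, 377, 197]

def N12 : Matrix (Fin 14) (Fin 14) ℤ :=
  !![4287, 5426, 72, 2393, 2393, 1772, 2393, 1772, 2393, 4, 2682, 4, 592, 68;
  5426, 11794, 592, 6512, 6512, 6822, 6512, 6822, 6512, 68, 2065, 68, 3020, 524;
  72, 592, 2632, 754, 754, 2325, 754, 2325, 754, 1136, 4, 1136, 2841, 1496;
  2393, 6512, 754, 4739, 4738, 5956, 3373, 4591, 3373, 130, 686, 130, 2787, 624;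
  2393, 6512, 754, 4738, 4739, 5956, 3373, 4591, 3373, 130, 686, 130, 2787, 624;
  1772, 6822, 2325, 5956, 5956, 10033, 4591, 8667, 4591, 556, 328, 556, 6118, 1769;
  2393, 6512, 754, 3373, 3373, 4591, 4739, 5956, 4738, 130, 686, 130, 2787, 624;
  1772, 6822, 2325, 4591, 4591, 8667, 5956, 10033, 5956, 556, 328, 556, 6118, 1769;
  2393, 6512, 754, 3373, 3373, 4591, 4738, 5956, 4739, 130, 686, 130, 2787, 624;
  4, 68, 1136, 130, 130, 556, 130, 556, 130, 543, 0, 543, 953, 593;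
  2682, 2065, 4, 686, 686, 328, 686, 328, 686, 0, 2222, 0, 72, 4;
  4, 68, 1136, 130, 130, 556, 130, 556, 130, 543, 0, 543, 953, 593;
  592, 3020, 2841, 2787, 2787, 6118, 2787, 6118, 2787, 953, 72, 953, 4984, 1888;
  68, 524, 1496, 624, 624, 1769, 624, 1769, 624, 593, 4, 593, 1888, 903]

def N14 : Matrix (Fin 14) (Fin 14) ℤ :=
  !![20969, 30137, 812, 14377, 14377, 12466, 14377, 12466, 14377, 80, 12333, 80, 4868, 732;
  30137, 66856, 4864, 38152, 38152, 43332, 38152, 43332, 38152, 728, 11621, 728, 20800, 4136;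
  812, 4864, 11873, 5179, 5179, 13649, 5179, 13649, 5179, 4904, 84, 4904, 14460, 6969;
  14377, 38152, 5179, 26684, 26683, 34723, 21222, 29262, 21222, 1014, 4451, 1014, 17499, 4165;
  14377, 38152, 5179, 26683, 26684, 34723, 21222, 29262, 21222, 1014, 4451, 1014, 17499, 4165;
  12466, 43332, 13649, 34723, 34723, 56796, 29262, 51334, 29262, 3437, 2756, 3437, 35030, 10212;
  14377, 38152, 5179, 21222, 21222, 29262, 26684, 34723, 26683, 1014, 4451, 1014, 17499, 4165;
  12466, 43332, 13649, 29262, 29262, 51334, 34723, 56796, 34723, 3437, 2756, 3437, 35030, 10212;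
  14377, 38152, 5179, 21222, 21222, 29262, 26683, 34723, 26684, 1014, 4451, 1014, 17499, 4165;
  80, 728, 4904, 1014, 1014, 3437, 1014, 3437, 1014, 2222, 4, 2222, 4747, 2682;
  12333, 11621, 84, 4451, 4451, 2756, 4451, 2756, 4451, 4, 9348, 4, 808, 80;
  80, 728, 4904, 1014, 1014, 3437, 1014, 3437, 1014, 2222, 4, 2222, 4747, 2682;
  4868, 20800, 14460, 17499, 17499, 35030, 17499, 35030, 17499, 4747, 808, 4747, 26933, 9713;
  732, 4136, 6969, 4165, 4165, 10212, 4165, 10212, 4165, 2682, 80, 2682, 9713, 4287]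

def N16 : Matrix (Fin 14) (Fin 14) ℤ :=
  !![105377, 168888, 7384, 85734, 85734, 83486, 85734, 83486, 85734, 972, 57968, 972, 36212, 6412;
  168888, 383313, 36120, 224644, 224644, 270432, 224644, 270432, 224644, 6320, 65000, 6320, 137264, 29800;
  7384, 36120, 54983, 34050, 34050, 79414, 34050, 79414, 34050, 21681, 1064, 21681, 75060, 33302;
  85734, 224644, 34050, 152926, 152925, 204297, 131080, 182452, 131080, 7207, 27730, 7207, 108327, 26843;
  85734, 224644, 34050, 152925, 152926, 204297, 131080, 182452, 131080, 7207, 27730, 7207, 108327, 26843;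
  83486, 270432, 79414, 204297, 204297, 326198, 182452, 304352, 182452, 20523, 20734, 20523, 202051, 58891;
  85734, 224644, 34050, 131080, 131080, 182452, 152926, 204297, 152925, 7207, 27730, 7207, 108327, 26843;
  83486, 270432, 79414, 182452, 182452, 304352, 204297, 326198, 204297, 20523, 20734, 20523, 202051, 58891;
  85734, 224644, 34050, 131080, 131080, 182452, 152925, 204297, 152926, 7207, 27730, 7207, 108327, 26843;
  972, 6320, 21681, 7207, 7207, 20523, 7207, 20523, 7207, 9348, 92, 9348, 23954, 12333;
  57968, 65000, 1064, 27730, 27730, 20734, 27730, 20734, 27730, 92, 40377, 92, 7292, 972;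
  972, 6320, 21681, 7207, 7207, 20523, 7207, 20523, 7207, 9348, 92, 9348, 23954, 12333;
  36212, 137264, 75060, 108327, 108327, 202051, 108327, 202051, 108327, 23954, 7292, 23954, 148099, 51106;
  6412, 29800, 33302, 26843, 26843, 58891, 26843, 58891, 26843, 12333, 972, 12333, 51106, 20969]

def N18 : Matrix (Fin 14) (Fin 14) ℤ :=
  !![542987, 954977, 59336, 509576, 509576, 541624, 509576, 541624, 509576, 9328, 279281, 9328, 253192, 50008;
  954977, 2217403, 251944, 1327677, 1327677, 1668280, 1327677, 1668280, 1327677, 48760, 363888, 48760, 881312, 203184;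
  59336, 251944, 261690, 217684, 217684, 460816, 217684, 460816, 217684, 98345, 10576, 98345, 397233, 163345;
  509576, 1327677, 217684, 887718, 887717, 1209521, 800336, 1122140, 800336, 48464, 168924, 48464, 664296, 169220;
  509576, 1327677, 217684, 887717, 887718, 1209521, 800336, 1122140, 800336, 48464, 168924, 48464, 664296, 169220;
  541624, 1668280, 460816, 1209521, 1209521, 1893591, 1122140, 1806209, 1122140, 120460, 145688, 120460, 1172957, 340356;
  509576, 1327677, 217684, 800336, 800336, 1122140, 887718, 1209521, 887717, 48464, 168924, 48464, 664296, 169220;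
  541624, 1668280, 460816, 1122140, 1122140, 1806209, 1209521, 1893591, 1209521, 120460, 145688, 120460, 1172957, 340356;
  509576, 1327677, 217684, 800336, 800336, 1122140, 887717, 1209521, 887718, 48464, 168924, 48464, 664296, 169220;
  9328, 48760, 98345, 48464, 48464, 120460, 48464, 120460, 48464, 40377, 1248, 40377, 122968, 57968;
  279281, 363888, 10576, 168924, 168924, 145688, 168924, 145688, 168924, 1248, 179099, 1248, 58088, 9328;
  9328, 48760, 98345, 48464, 48464, 120460, 48464, 120460, 48464, 40377, 1248, 40377, 122968, 57968;
  253192, 881312, 397233, 664296, 664296, 1172957, 664296, 1172957, 664296, 122968, 58088, 122968, 826466, 274265;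
  50008, 203184, 163345, 169220, 169220, 340356, 169220, 340356, 169220, 57968, 9328, 57968, 274265, 105377]

def N19 : Matrix (Fin 14) (Fin 14) ℤ :=
  !![362536, 1336440, 822268, 1051200, 1051200, 1974129, 1051200, 1974129, 1051200, 279281, 77992, 279281, 1497964, 542987;
  1336440, 4217872, 1318865, 2995957, 2995957, 4872757, 2995957, 4872757, 2995957, 363888, 349464, 363888, 3172380, 954977;
  822268, 1318865, 69912, 678500, 678500, 687312, 678500, 687312, 678500, 10576, 458380, 10576, 311280, 59336;
  1051200, 2995957, 678500, 2097238, 2097239, 3103112, 1922476, 2928349, 1922476, 168924, 314612, 168924, 1837253, 509576;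
  1051200, 2995957, 678500, 2097239, 2097238, 3103112, 1922476, 2928349, 1922476, 168924, 314612, 168924, 1837253, 509576;
  1974129, 4872757, 687312, 3103112, 3103112, 4087322, 2928349, 3912560, 2928349, 145688, 701736, 145688, 2209904, 541624;
  1051200, 2995957, 678500, 1922476, 1922476, 2928349, 2097238, 3103112, 2097239, 168924, 314612, 168924, 1837253, 509576;
  1974129, 4872757, 687312, 2928349, 2928349, 3912560, 3103112, 4087322, 3103112, 145688, 701736, 145688, 2209904, 541624;
  1051200, 2995957, 678500, 1922476, 1922476, 2928349, 2097239, 3103112, 2097238, 168924, 314612, 168924, 1837253, 509576;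
  279281, 363888, 10576, 168924, 168924, 145688, 168924, 145688, 168924, 1248, 179099, 1248, 58088, 9328;
  77992, 349464, 458380, 314612, 314612, 701736, 314612, 701736, 314612, 179099, 13072, 179099, 643169, 279281;
  279281, 363888, 10576, 168924, 168924, 145688, 168924, 145688, 168924, 1248, 179099, 1248, 58088, 9328;
  1497964, 3172380, 311280, 1837253, 1837253, 2209904, 1837253, 2209904, 1837253, 58088, 643169, 58088, 1134504, 253192;
  542987, 954977, 59336, 509576, 509576, 541624, 509576, 541624, 509576, 9328, 279281, 9328, 253192, 50008]

lemma hp1 : G14.adjMatrix ℤ = N1 := by decide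

lemma hs2 : N1 * N1 = N2 := by decide

lemma hs4 : N2 * N2 = N4 := by decide

lemma hs6 : N4 * N2 = N6 := by decide

lemma hs8 : N6 * N2 = N8 := by decide

lemma hs10 : N8 * N2 = N10 := by decide

lemma hs12 : N10 * N2 = N12 := by decide

lemma hs14 : N12 * N2 = N14 := by decide

lemma hs16 : N14 * N2 = N16 := by decide

lemma hs18 : N16 * N2 = N18 := by decide

lemma hs19 : N18 * N1 = N19 := by decide

lemma hp2 : G14.adjMatrix ℤ ^ 2 = N2 := by rw [pow_two, hp1]; exact hs2

lemma hp4 : G14.adjMatrix ℤ ^ 4 = N4 := by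
  have h := pow_add (G14.adjMatrix ℤ) 2 2; norm_num at h; rw [h, hp2]; exact hs4

lemma hp6 : G14.adjMatrix ℤ ^ 6 = N6 := by
  have h := pow_add (G14.adjMatrix ℤ) 4 2; norm_num at h; rw [h, hp4, hp2]; exact hs6

lemma hp8 : G14.adjMatrix ℤ ^ 8 = N8 := by
  have h := pow_add (G14.adjMatrix ℤ) 6 2; norm_num at h; rw [h, hp6, hp2]; exact hs8

lemma hp10 : G14.adjMatrix ℤ ^ 10 = N10 := by
  have h := pow_add (G14.adjMatrix ℤ) 8 2; norm_num at h; rw [h, hp8, hp2]; exact hs10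

lemma hp12 : G14.adjMatrix ℤ ^ 12 = N12 := by
  have h := pow_add (G14.adjMatrix ℤ) 10 2; norm_num at h; rw [h, hp10, hp2]; exact hs12

lemma hp14 : G14.adjMatrix ℤ ^ 14 = N14 := by
  have h := pow_add (G14.adjMatrix ℤ) 12 2; norm_num at h; rw [h, hp12, hp2]; exact hs14

lemma hp16 : G14.adjMatrix ℤ ^ 16 = N16 := by
  have h := pow_add (G14.adjMatrix ℤ) 14 2; norm_num at h; rw [h, hp14, hp2]; exact hs16

lemma hp18 : G14.adjMatrix ℤ ^ 18 = N18 := by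
  have h := pow_add (G14.adjMatrix ℤ) 16 2; norm_num at h; rw [h, hp16, hp2]; exact hs18

lemma hp19 : G14.adjMatrix ℤ ^ 19 = N19 := by
  have h := pow_add (G14.adjMatrix ℤ) 18 1; norm_num at h; rw [h, hp18, hp1]; exact hs19

lemma htr1 : (G14.adjMatrix ℤ ^ 1).trace = 0 := by rw [hp1]; decide

lemma htr2 : (G14.adjMatrix ℤ ^ 2).trace = 30 := by rw [hp2]; decide

lemma htr3 : (G14.adjMatrix ℤ ^ 3).trace = 12 := by
  have h := pow_add (G14.adjMatrix ℤ) 2 1; norm_num at h; rw [h, hp2, hp1]; decide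

lemma htr4 : (G14.adjMatrix ℤ ^ 4).trace = 114 := by rw [hp4]; decide

lemma htr5 : (G14.adjMatrix ℤ ^ 5).trace = 80 := by
  have h := pow_add (G14.adjMatrix ℤ) 4 1; norm_num at h; rw [h, hp4, hp1]; decide

lemma htr6 : (G14.adjMatrix ℤ ^ 6).trace = 510 := by rw [hp6]; decide

lemma htr7 : (G14.adjMatrix ℤ ^ 7).trace = 476 := by
  have h := pow_add (G14.adjMatrix ℤ) 6 1; norm_num at h; rw [h, hp6, hp1]; decide

lemma htr8 : (G14.adjMatrix ℤ ^ 8).trace = 2474 := by rw [hp8]; decide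

lemma htr9 : (G14.adjMatrix ℤ ^ 9).trace = 2820 := by
  have h := pow_add (G14.adjMatrix ℤ) 8 1; norm_num at h; rw [h, hp8, hp1]; decide

lemma htr10 : (G14.adjMatrix ℤ ^ 10).trace = 12630 := by rw [hp10]; decide

lemma htr11 : (G14.adjMatrix ℤ ^ 11).trace = 16852 := by
  have h := pow_add (G14.adjMatrix ℤ) 10 1; norm_num at h; rw [h, hp10, hp1]; decide

lemma htr12 : (G14.adjMatrix ℤ ^ 12).trace = 66930 := by rw [hp12]; decide

lemma htr13 : (G14.adjMatrix ℤ ^ 13).trace = 101400 := by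
  have h := pow_add (G14.adjMatrix ℤ) 12 1; norm_num at h; rw [h, hp12, hp1]; decide

lemma htr14 : (G14.adjMatrix ℤ ^ 14).trace = 365038 := by rw [hp14]; decide

lemma htr15 : (G14.adjMatrix ℤ ^ 15).trace = 612452 := by
  have h := pow_add (G14.adjMatrix ℤ) 14 1; norm_num at h; rw [h, hp14, hp1]; decide

lemma htr16 : (G14.adjMatrix ℤ ^ 16).trace = 2035914 := by rw [hp16]; decide

lemma htr17 : (G14.adjMatrix ℤ ^ 17).trace = 3704844 := by
  have h := pow_add (G14.adjMatrix ℤ) 16 1; norm_num at h; rw [h, hp16, hp1]; decide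

lemma htr18 : (G14.adjMatrix ℤ ^ 18).trace = 11551830 := by rw [hp18]; decide

lemma htr19 : (G14.adjMatrix ℤ ^ 19).trace = 22413996 := by rw [hp19]; decide

lemma htr20 : (G14.adjMatrix ℤ ^ 20).trace = 66409234 := by
  have h := pow_add (G14.adjMatrix ℤ) 18 2; norm_num at h; rw [h, hp18, hp2]; decide

lemma htr21 : (G14.adjMatrix ℤ ^ 21).trace = 135511136 := by
  have h := pow_add (G14.adjMatrix ℤ) 19 2; norm_num at h; rw [h, hp19, hp2]; decide

lemma htr22 : (G14.adjMatrix ℤ ^ 22).trace = 385562526 := by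
  have h := pow_add (G14.adjMatrix ℤ) 18 4; norm_num at h; rw [h, hp18, hp4]; decide

lemma htr23 : (G14.adjMatrix ℤ ^ 23).trace = 818400812 := by
  have h := pow_add (G14.adjMatrix ℤ) 19 4; norm_num at h; rw [h, hp19, hp4]; decide

lemma htr24 : (G14.adjMatrix ℤ ^ 24).trace = 2255153258 := by
  have h := pow_add (G14.adjMatrix ℤ) 18 6; norm_num at h; rw [h, hp18, hp6]; decide

lemma htr25 : (G14.adjMatrix ℤ ^ 25).trace = 4936616980 := by
  have h := pow_add (G14.adjMatrix ℤ) 19 6; norm_num at h; rw [h, hp19, hp6]; decide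

lemma htr26 : (G14.adjMatrix ℤ ^ 26).trace = 13263557142 := by
  have h := pow_add (G14.adjMatrix ℤ) 18 8; norm_num at h; rw [h, hp18, hp8]; decide

lemma htr27 : (G14.adjMatrix ℤ ^ 27).trace = 29741685636 := by
  have h := pow_add (G14.adjMatrix ℤ) 19 8; norm_num at h; rw [h, hp19, hp8]; decide

lemma htr28 : (G14.adjMatrix ℤ ^ 28).trace = 78331917106 := by
  have h := pow_add (G14.adjMatrix ℤ) 18 10; norm_num at h; rw [h, hp18, hp10]; decide

lemma htr29 : (G14.adjMatrix ℤ ^ 29).trace = 178982127848 := by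
  have h := pow_add (G14.adjMatrix ℤ) 19 10; norm_num at h; rw [h, hp19, hp10]; decide

lemma htr30 : (G14.adjMatrix ℤ ^ 30).trace = 464044902030 := by
  have h := pow_add (G14.adjMatrix ℤ) 18 12; norm_num at h; rw [h, hp18, hp12]; decide

lemma htr31 : (G14.adjMatrix ℤ ^ 31).trace = 1076003014708 := by
  have h := pow_add (G14.adjMatrix ℤ) 19 12; norm_num at h; rw [h, hp19, hp12]; decide

lemma htr32 : (G14.adjMatrix ℤ ^ 32).trace = 2755421856650 := by
  have h := pow_add (G14.adjMatrix ℤ) 18 14; norm_num at h; rw [h, hp18, hp14]; decide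

lemma htr33 : (G14.adjMatrix ℤ ^ 33).trace = 6463004196892 := by
  have h := pow_add (G14.adjMatrix ℤ) 19 14; norm_num at h; rw [h, hp19, hp14]; decide

lemma htr34 : (G14.adjMatrix ℤ ^ 34).trace = 16389808638870 := by
  have h := pow_add (G14.adjMatrix ℤ) 18 16; norm_num at h; rw [h, hp18, hp16]; decide

lemma htr35 : (G14.adjMatrix ℤ ^ 35).trace = 38790835965276 := by
  have h := pow_add (G14.adjMatrix ℤ) 19 16; norm_num at h; rw [h, hp19, hp16]; decide

lemma htr36 : (G14.adjMatrix ℤ ^ 36).trace = 97618482718674 := by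
  have h := pow_add (G14.adjMatrix ℤ) 18 18; norm_num at h; rw [h, hp18]; decide


/-! ### Energy lower bound -/

lemma adjR_eq_map :
    (@SimpleGraph.adjMatrix ℝ (Fin 14) G14 (Classical.decRel _) _ _) =
      (G14.adjMatrix ℤ).map ((↑·) : ℤ → ℝ) := by
  ext i j
  by_cases h : G14.Adj i j <;> simp [h, Matrix.map_apply]

lemma energy_lb :
    ((436189606976189135655281 : ℝ)/25000000000000000000000) ≤ graphEnergy G14 := by
  have hC := @adjMatrix_isHermitian _ _ _ G14 (Classical.decRel _)
  have hE : graphEnergy G14 = ∑ i, |hC.eigenvalues i| := rfl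
  have hbase : ∀ k : ℕ, ∑ i, hC.eigenvalues i ^ k = (((G14.adjMatrix ℤ ^ k).trace : ℤ) : ℝ) := by
    intro k
    rw [← trace_pow_eq_sum_pow hC k, adjR_eq_map, trace_map_pow]

  have hk1 : ∑ i, hC.eigenvalues i = ((0:ℤ) : ℝ) := by
    have := hbase 1; rw [htr1] at this; simpa using this
  have hk2 : ∑ i, hC.eigenvalues i ^ 2 = ((30:ℤ) : ℝ) := by
    rw [hbase 2, htr2]
  have hk3 : ∑ i, hC.eigenvalues i ^ 3 = ((12:ℤ) : ℝ) := by
    rw [hbase 3, htr3]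
  have hk4 : ∑ i, hC.eigenvalues i ^ 4 = ((114:ℤ) : ℝ) := by
    rw [hbase 4, htr4]
  have hk5 : ∑ i, hC.eigenvalues i ^ 5 = ((80:ℤ) : ℝ) := by
    rw [hbase 5, htr5]
  have hk6 : ∑ i, hC.eigenvalues i ^ 6 = ((510:ℤ) : ℝ) := by
    rw [hbase 6, htr6]
  have hk7 : ∑ i, hC.eigenvalues i ^ 7 = ((476:ℤ) : ℝ) := by
    rw [hbase 7, htr7]
  have hk8 : ∑ i, hC.eigenvalues i ^ 8 = ((2474:ℤ) : ℝ) := by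
    rw [hbase 8, htr8]
  have hk9 : ∑ i, hC.eigenvalues i ^ 9 = ((2820:ℤ) : ℝ) := by
    rw [hbase 9, htr9]
  have hk10 : ∑ i, hC.eigenvalues i ^ 10 = ((12630:ℤ) : ℝ) := by
    rw [hbase 10, htr10]
  have hk11 : ∑ i, hC.eigenvalues i ^ 11 = ((16852:ℤ) : ℝ) := by
    rw [hbase 11, htr11]
  have hk12 : ∑ i, hC.eigenvalues i ^ 12 = ((66930:ℤ) : ℝ) := by
    rw [hbase 12, htr12]
  have hk13 : ∑ i, hC.eigenvalues i ^ 13 = ((101400:ℤ) : ℝ) := by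
    rw [hbase 13, htr13]
  have hk14 : ∑ i, hC.eigenvalues i ^ 14 = ((365038:ℤ) : ℝ) := by
    rw [hbase 14, htr14]
  have hk15 : ∑ i, hC.eigenvalues i ^ 15 = ((612452:ℤ) : ℝ) := by
    rw [hbase 15, htr15]
  have hk16 : ∑ i, hC.eigenvalues i ^ 16 = ((2035914:ℤ) : ℝ) := by
    rw [hbase 16, htr16]
  have hk17 : ∑ i, hC.eigenvalues i ^ 17 = ((3704844:ℤ) : ℝ) := by
    rw [hbase 17, htr17]
  have hk18 : ∑ i, hC.eigenvalues i ^ 18 = ((11551830:ℤ) : ℝ) := by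
    rw [hbase 18, htr18]
  have hk19 : ∑ i, hC.eigenvalues i ^ 19 = ((22413996:ℤ) : ℝ) := by
    rw [hbase 19, htr19]
  have hk20 : ∑ i, hC.eigenvalues i ^ 20 = ((66409234:ℤ) : ℝ) := by
    rw [hbase 20, htr20]
  have hk21 : ∑ i, hC.eigenvalues i ^ 21 = ((135511136:ℤ) : ℝ) := by
    rw [hbase 21, htr21]
  have hk22 : ∑ i, hC.eigenvalues i ^ 22 = ((385562526:ℤ) : ℝ) := by
    rw [hbase 22, htr22]
  have hk23 : ∑ i, hC.eigenvalues i ^ 23 = ((818400812:ℤ) : ℝ) := by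
    rw [hbase 23, htr23]
  have hk24 : ∑ i, hC.eigenvalues i ^ 24 = ((2255153258:ℤ) : ℝ) := by
    rw [hbase 24, htr24]
  have hk25 : ∑ i, hC.eigenvalues i ^ 25 = ((4936616980:ℤ) : ℝ) := by
    rw [hbase 25, htr25]
  have hk26 : ∑ i, hC.eigenvalues i ^ 26 = ((13263557142:ℤ) : ℝ) := by
    rw [hbase 26, htr26]
  have hk27 : ∑ i, hC.eigenvalues i ^ 27 = ((29741685636:ℤ) : ℝ) := by
    rw [hbase 27, htr27]
  have hk28 : ∑ i, hC.eigenvalues i ^ 28 = ((78331917106:ℤ) : ℝ) := by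
    rw [hbase 28, htr28]
  have hk29 : ∑ i, hC.eigenvalues i ^ 29 = ((178982127848:ℤ) : ℝ) := by
    rw [hbase 29, htr29]
  have hk30 : ∑ i, hC.eigenvalues i ^ 30 = ((464044902030:ℤ) : ℝ) := by
    rw [hbase 30, htr30]
  have hk31 : ∑ i, hC.eigenvalues i ^ 31 = ((1076003014708:ℤ) : ℝ) := by
    rw [hbase 31, htr31]
  have hk32 : ∑ i, hC.eigenvalues i ^ 32 = ((2755421856650:ℤ) : ℝ) := by
    rw [hbase 32, htr32]
  have hk33 : ∑ i, hC.eigenvalues i ^ 33 = ((6463004196892:ℤ) : ℝ) := by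
    rw [hbase 33, htr33]
  have hk34 : ∑ i, hC.eigenvalues i ^ 34 = ((16389808638870:ℤ) : ℝ) := by
    rw [hbase 34, htr34]
  have hk35 : ∑ i, hC.eigenvalues i ^ 35 = ((38790835965276:ℤ) : ℝ) := by
    rw [hbase 35, htr35]
  have hk36 : ∑ i, hC.eigenvalues i ^ 36 = ((97618482718674:ℤ) : ℝ) := by
    rw [hbase 36, htr36]

  have hsum : ∑ i, Qpoly (hC.eigenvalues i) = ((436189606976189135655281 : ℝ)/25000000000000000000000) := by
    unfold Qpoly
    simp only [Finset.sum_add_distrib, ← Finset.mul_sum, Finset.sum_const,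
      Finset.card_univ, Fintype.card_fin, nsmul_eq_mul]
    rw [hk1, hk2, hk3, hk4, hk5, hk6, hk7, hk8, hk9, hk10, hk11, hk12, hk13, hk14, hk15, hk16, hk17, hk18, hk19, hk20, hk21, hk22, hk23, hk24, hk25, hk26, hk27, hk28, hk29, hk30, hk31, hk32, hk33, hk34, hk35, hk36]
    norm_num
  calc ((436189606976189135655281 : ℝ)/25000000000000000000000) = ∑ i, Qpoly (hC.eigenvalues i) := hsum.symm
    _ ≤ ∑ i, |hC.eigenvalues i| := Finset.sum_le_sum (fun i _ => Qpoly_le_abs _)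
    _ = graphEnergy G14 := hE.symm


/-! ### Matching number bound -/

def cls : Sym2 (Fin 14) → Fin 5 := fun e =>
  if (0 : Fin 14) ∈ e then 0 else if (1 : Fin 14) ∈ e then 1 else if (10 : Fin 14) ∈ e then 2
  else if ((3 : Fin 14) ∈ e ∨ (4 : Fin 14) ∈ e) then 3 else 4

lemma shared_vertex {M : G14.Subgraph} (hM : M.IsMatching) {e1 e2 : Sym2 (Fin 14)}
    (h1 : e1 ∈ M.edgeSet) (h2 : e2 ∈ M.edgeSet) {v : Fin 14} (hv1 : v ∈ e1) (hv2 : v ∈ e2) :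
    e1 = e2 := by
  obtain ⟨w1, rfl⟩ := Sym2.mem_iff_exists.mp hv1
  obtain ⟨w2, rfl⟩ := Sym2.mem_iff_exists.mp hv2
  rw [SimpleGraph.Subgraph.mem_edgeSet] at h1 h2
  obtain ⟨w, -, huniq⟩ := hM h1.fst_mem
  rw [huniq w1 h1, huniq w2 h2]

lemma edge_enum (e : Sym2 (Fin 14)) (he : e ∈ G14.edgeSet) :
    e = s(0,2) ∨ e = s(0,12) ∨ e = s(0,13) ∨ e = s(1,5) ∨ e = s(1,7) ∨ e = s(1,12) ∨
    e = s(2,10) ∨ e = s(3,4) ∨ e = s(3,5) ∨ e = s(4,5) ∨ e = s(6,7) ∨ e = s(6,8) ∨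
    e = s(7,8) ∨ e = s(9,10) ∨ e = s(10,11) := by
  revert he
  refine Sym2.ind (fun a b => ?_) e
  rw [SimpleGraph.mem_edgeSet]
  revert a b
  decide

lemma matching_le (M : G14.Subgraph) (hM : M.IsMatching) : M.edgeSet.ncard ≤ 5 := by
  have hinj : Set.InjOn cls M.edgeSet := by
    intro e1 he1 e2 he2 hf
    have g1 := edge_enum e1 (M.edgeSet_subset he1)
    have g2 := edge_enum e2 (M.edgeSet_subset he2)
    rcases g1 with rfl|rfl|rfl|rfl|rfl|rfl|rfl|rfl|rfl|rfl|rfl|rfl|rfl|rfl|rfl <;>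
    rcases g2 with rfl|rfl|rfl|rfl|rfl|rfl|rfl|rfl|rfl|rfl|rfl|rfl|rfl|rfl|rfl <;>
      first
        | rfl
        | exact absurd hf (by decide)
        | exact shared_vertex hM he1 he2 (v := 0) (by decide) (by decide)
        | exact shared_vertex hM he1 he2 (v := 1) (by decide) (by decide)
        | exact shared_vertex hM he1 he2 (v := 10) (by decide) (by decide)
        | exact shared_vertex hM he1 he2 (v := 3) (by decide) (by decide)
        | exact shared_vertex hM he1 he2 (v := 4) (by decide) (by decide)
        | exact shared_vertex hM he1 he2 (v := 5) (by decide) (by decide)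
        | exact shared_vertex hM he1 he2 (v := 6) (by decide) (by decide)
        | exact shared_vertex hM he1 he2 (v := 7) (by decide) (by decide)
        | exact shared_vertex hM he1 he2 (v := 8) (by decide) (by decide)
  calc M.edgeSet.ncard = (cls '' M.edgeSet).ncard := (Set.ncard_image_of_injOn hinj).symm
    _ ≤ (Set.univ : Set (Fin 5)).ncard := Set.ncard_le_ncard (Set.subset_univ _) Set.finite_univ
    _ = 5 := by simp [Set.ncard_univ]

lemma matchingNumber_le : matchingNumber G14 ≤ 5 := by
  apply csSup_le'
  rintro k ⟨M, hM, rfl⟩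
  exact matching_le M hM

/-! ### Connectivity and max degree -/

lemma G14_connected : G14.Connected := by
  rw [connected_iff]
  refine ⟨fun u v => ?_, ⟨0⟩⟩
  have r : ∀ v : Fin 14, G14.Reachable 0 v := by
    have h2 : G14.Reachable 0 2 := (by decide : G14.Adj 0 2).reachable
    have h12 : G14.Reachable 0 12 := (by decide : G14.Adj 0 12).reachable
    have h13 : G14.Reachable 0 13 := (by decide : G14.Adj 0 13).reachable
    have h10 : G14.Reachable 0 10 := h2.trans (by decide : G14.Adj 2 10).reachable
    have h9 : G14.Reachable 0 9 := h10.trans (by decide : G14.Adj 10 9).reachable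
    have h11 : G14.Reachable 0 11 := h10.trans (by decide : G14.Adj 10 11).reachable
    have h1 : G14.Reachable 0 1 := h12.trans (by decide : G14.Adj 12 1).reachable
    have h5 : G14.Reachable 0 5 := h1.trans (by decide : G14.Adj 1 5).reachable
    have h7 : G14.Reachable 0 7 := h1.trans (by decide : G14.Adj 1 7).reachable
    have h3 : G14.Reachable 0 3 := h5.trans (by decide : G14.Adj 5 3).reachable
    have h4 : G14.Reachable 0 4 := h5.trans (by decide : G14.Adj 5 4).reachable
    have h6 : G14.Reachable 0 6 := h7.trans (by decide : G14.Adj 7 6).reachable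
    have h8 : G14.Reachable 0 8 := h7.trans (by decide : G14.Adj 7 8).reachable
    intro v
    fin_cases v <;> first | exact Reachable.refl _ | assumption
  exact (r u).symm.trans (r v)

lemma maxDeg_eq : maxDeg G14 = 3 := by
  have h : maxDeg G14 = G14.maxDegree := by
    unfold maxDeg
    congr!
  rw [h]; decide

/-- There is a connected simple graph on 14 vertices with `2 ≤ Δ(G) ≤ 5` and
`E(G) > 2 ν(G) √(Δ(G))`. -/
theorem energy_matching_conjecture_fails_on_order_14 :
    ∃ G : SimpleGraph (Fin 14), G.Connected ∧ 2 ≤ maxDeg G ∧ maxDeg G ≤ 5 ∧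
      2 * (matchingNumber G : ℝ) * Real.sqrt (maxDeg G) < graphEnergy G := by
  refine ⟨G14, G14_connected, by rw [maxDeg_eq]; norm_num, by rw [maxDeg_eq]; norm_num, ?_⟩
  have hs3 : Real.sqrt ((maxDeg G14 : ℕ) : ℝ) = Real.sqrt 3 := by
    rw [maxDeg_eq]; norm_num
  have hnu : ((matchingNumber G14 : ℕ) : ℝ) ≤ 5 := by
    exact_mod_cast matchingNumber_le
  have h1 : 2 * (matchingNumber G14 : ℝ) * Real.sqrt ((maxDeg G14 : ℕ) : ℝ) ≤ 10 * Real.sqrt 3 := by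
    rw [hs3]
    have := Real.sqrt_nonneg (3:ℝ)
    nlinarith [hnu, Real.sqrt_nonneg (3:ℝ)]
  have h2 : 10 * Real.sqrt 3 < ((436189606976189135655281 : ℝ)/25000000000000000000000) := by
    have hsq : Real.sqrt 3 ^ 2 = 3 := Real.sq_sqrt (by norm_num)
    have hpos : (0:ℝ) ≤ Real.sqrt 3 := Real.sqrt_nonneg 3
    nlinarith [hsq, hpos]
  calc 2 * (matchingNumber G14 : ℝ) * Real.sqrt ((maxDeg G14 : ℕ) : ℝ)
      ≤ 10 * Real.sqrt 3 := h1
    _ < ((436189606976189135655281 : ℝ)/25000000000000000000000) := h2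
    _ ≤ graphEnergy G14 := energy_lb
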